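/- Fix a transcript with forecasts p ∈ P, level sets S(p) of sizes n(p), labels y_t ∈ {0,1}, and T = Σ_p n(p). Let ℓ : {0,1} × [0,1] → ℝ≥0 be convex in its second argument with derivative bounded by D and with C = max_a |ℓ(0,a) − ℓ(1,a)|. If the L1-swap-multicalibration error (sup over admissible families {f_p}, including the constant-1 function, of Σ_p (n(p)/T)|(1/n(p))Σ_{t∈S(p)} f_p(x_t)(y_t − p)|) is at most α, then the swap omniprediction regret Σ_p (n(p)/T)[(1/n(p))Σ_{t∈S(p)} ℓ(y_t, k^ℓ(p)) − (1/n(p))Σ_{t∈S(p)} ℓ(y_t, f_p(x_t))] is at most (C + 4D)·α for every admissible family {f_p} with f_p(x_t) ∈ [0,1]. -/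

import Mathlib

lemma omni_per_group {ι : Type*} (s : Finset ι) (y : ι → ℝ) (hy : ∀ t, y t = 0 ∨ y t = 1)
    (ℓ : ℝ → ℝ → ℝ)
    (hconv : ∀ yv : ℝ, (yv = 0 ∨ yv = 1) → ConvexOn ℝ (Set.Icc (0:ℝ) 1) (ℓ yv))
    (D : ℝ) (hD0 : 0 ≤ D)
    (p : ℝ) (hp01 : p ∈ Set.Icc (0:ℝ) 1)
    (kp : ℝ) (hkp01 : kp ∈ Set.Icc (0:ℝ) 1)
    (hkmin : ∀ a ∈ Set.Icc (0:ℝ) 1,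
      (1 - p) * ℓ 0 kp + p * ℓ 1 kp ≤ (1 - p) * ℓ 0 a + p * ℓ 1 a)
    (F : ι → ℝ) (hF : ∀ t ∈ s, F t ∈ Set.Icc (0:ℝ) 1)
    (U V : ι → ℝ)
    (huv : ∀ t ∈ s, 2*D*(U t - V t) = (ℓ 1 (F t) - ℓ 0 (F t)) - (ℓ 1 kp - ℓ 0 kp))
    (hcard : 0 < s.card) :
    (1 / (s.card : ℝ)) * ∑ t ∈ s, ℓ (y t) kp -
      (1 / (s.card : ℝ)) * ∑ t ∈ s, ℓ (y t) (F t) ≤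
    2*D*|(1 / (s.card : ℝ)) * ∑ t ∈ s, U t * (y t - p)| +
      2*D*|(1 / (s.card : ℝ)) * ∑ t ∈ s, V t * (y t - p)| := by
  set n : ℝ := (s.card : ℝ) with hndef
  have hnpos : 0 < n := by rw [hndef]; exact_mod_cast hcard
  have hne : n ≠ 0 := ne_of_gt hnpos
  have hptw : ∀ (t : ι) (a : ℝ), ℓ (y t) a = ℓ 0 a + y t * (ℓ 1 a - ℓ 0 a) := by
    intro t a
    rcases hy t with h | h <;> rw [h] <;> ring
  have sum1 : ∑ t ∈ s, ℓ (y t) kp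
      = n * ℓ 0 kp + (∑ t ∈ s, y t) * (ℓ 1 kp - ℓ 0 kp) := by
    rw [Finset.sum_congr rfl (fun t _ => hptw t kp), Finset.sum_add_distrib,
      Finset.sum_const, ← Finset.sum_mul, nsmul_eq_mul]
  have sum2 : ∑ t ∈ s, ℓ (y t) (F t) =
      (∑ t ∈ s, ((1-p) * ℓ 0 (F t) + p * ℓ 1 (F t)))
        + ∑ t ∈ s, (y t - p) * (ℓ 1 (F t) - ℓ 0 (F t)) := by
    rw [← Finset.sum_add_distrib]
    refine Finset.sum_congr rfl (fun t ht => ?_)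
    rw [hptw t (F t)]; ring
  -- Jensen
  have hconvL : ConvexOn ℝ (Set.Icc (0:ℝ) 1) (fun a => (1-p)*ℓ 0 a + p*ℓ 1 a) := by
    have c0 := (hconv 0 (Or.inl rfl)).smul (show (0:ℝ) ≤ 1-p by linarith [hp01.2])
    have c1 := (hconv 1 (Or.inr rfl)).smul hp01.1
    have h := c0.add c1
    exact h
  have hw0 : ∀ t ∈ s, (0:ℝ) ≤ 1/n := fun _ _ => le_of_lt (by positivity)
  have hw1 : ∑ _t ∈ s, (1/n : ℝ) = 1 := by
    rw [Finset.sum_const, nsmul_eq_mul, ← hndef]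
    field_simp
  have hmeanmem : (∑ t ∈ s, (1/n : ℝ) • F t) ∈ Set.Icc (0:ℝ) 1 :=
    (convex_Icc (0:ℝ) 1).sum_mem hw0 hw1 hF
  have hjen := hconvL.map_sum_le hw0 hw1 hF
  have hkp := hkmin _ hmeanmem
  have hJen : (1-p)*ℓ 0 kp + p*ℓ 1 kp ≤
      (1/n) * ∑ t ∈ s, ((1-p)*ℓ 0 (F t) + p*ℓ 1 (F t)) := by
    simp only [smul_eq_mul] at hjen
    calc (1-p)*ℓ 0 kp + p*ℓ 1 kp
        ≤ (1-p)*ℓ 0 (∑ t ∈ s, (1/n : ℝ) * F t)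
          + p*ℓ 1 (∑ t ∈ s, (1/n : ℝ) * F t) := by
          have h2 := hkp
          simp only [smul_eq_mul] at h2
          exact h2
      _ ≤ ∑ t ∈ s, (1/n : ℝ) * ((1-p)*ℓ 0 (F t) + p*ℓ 1 (F t)) := hjen
      _ = (1/n) * ∑ t ∈ s, ((1-p)*ℓ 0 (F t) + p*ℓ 1 (F t)) := by
          rw [Finset.mul_sum]
  -- swap identity
  have hswap2 : (∑ t ∈ s, (y t - p) * (ℓ 1 (F t) - ℓ 0 (F t)))
        - (∑ t ∈ s, y t) * (ℓ 1 kp - ℓ 0 kp) + n * p * (ℓ 1 kp - ℓ 0 kp) =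
      2*D*(∑ t ∈ s, U t*(y t - p)) - 2*D*(∑ t ∈ s, V t*(y t - p)) := by
    have hterm : ∀ t ∈ s, (y t - p)*((ℓ 1 (F t) - ℓ 0 (F t)) - (ℓ 1 kp - ℓ 0 kp)) =
        2*D*(U t*(y t - p)) - 2*D*(V t*(y t - p)) := by
      intro t ht
      have h := huv t ht
      linear_combination (p - y t) * h
    have e1 : ∑ t ∈ s, (y t - p)*((ℓ 1 (F t) - ℓ 0 (F t)) - (ℓ 1 kp - ℓ 0 kp)) =
        2*D*(∑ t ∈ s, U t*(y t - p)) - 2*D*(∑ t ∈ s, V t*(y t - p)) := by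
      rw [Finset.sum_congr rfl hterm, Finset.sum_sub_distrib, ← Finset.mul_sum,
        ← Finset.mul_sum]
    rw [← e1]
    have e2 : ∑ t ∈ s, (y t - p)*((ℓ 1 (F t) - ℓ 0 (F t)) - (ℓ 1 kp - ℓ 0 kp)) =
        (∑ t ∈ s, (y t - p) * (ℓ 1 (F t) - ℓ 0 (F t)))
          - (∑ t ∈ s, (y t - p)) * (ℓ 1 kp - ℓ 0 kp) := by
      rw [Finset.sum_mul, ← Finset.sum_sub_distrib]
      exact Finset.sum_congr rfl (fun t _ => by ring)
    rw [e2, Finset.sum_sub_distrib, Finset.sum_const, nsmul_eq_mul, ← hndef]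
    ring
  set Su : ℝ := ∑ t ∈ s, U t*(y t - p) with hSudef
  set Sv : ℝ := ∑ t ∈ s, V t*(y t - p) with hSvdef
  have habsU : -(2*D*((1/n)*Su)) ≤ 2*D*|(1/n)*Su| := by
    have h := neg_abs_le ((1/n)*Su)
    nlinarith [abs_nonneg ((1/n)*Su)]
  have habsV : 2*D*((1/n)*Sv) ≤ 2*D*|(1/n)*Sv| := by
    have h := le_abs_self ((1/n)*Sv)
    nlinarith [abs_nonneg ((1/n)*Sv)]
  have hn1 : (1/n) * n = 1 := by field_simp
  have key : (1/n) * ∑ t ∈ s, ℓ (y t) kp - (1/n) * ∑ t ∈ s, ℓ (y t) (F t)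
      = (((1-p)*ℓ 0 kp + p*ℓ 1 kp)
          - (1/n) * ∑ t ∈ s, ((1-p)*ℓ 0 (F t) + p*ℓ 1 (F t)))
        - (2*D*((1/n)*Su) - 2*D*((1/n)*Sv)) := by
    rw [sum1, sum2]
    have h := hswap2
    field_simp
    linear_combination -hswap2
  rw [key]
  linarith [habsU, habsV, hJen]

/-- If the L1-swap-multicalibration error over all `[0,1]`-valued families (including the
constant-1 function) is at most `α`, then the swap omniprediction regret for any convex,
`D`-Lipschitz loss `ℓ` with scale `C` against any `[0,1]`-valued family is at most `(C+4D)α`. -/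
theorem L1_swap_multicalibration_to_swap_omniprediction {ι X : Type*}
    (P : Finset ℝ) (hP : ∀ p ∈ P, p ∈ Set.Icc (0:ℝ) 1)
    (S : ℝ → Finset ι)
    (x : ι → X) (y : ι → ℝ) (hy : ∀ t, y t = 0 ∨ y t = 1)
    (T : ℝ) (hT : T = ∑ p ∈ P, ((S p).card : ℝ)) (hTpos : 0 < T)
    (ℓ : ℝ → ℝ → ℝ) (hℓ0 : ∀ yv a, 0 ≤ ℓ yv a)
    (hconv : ∀ yv : ℝ, (yv = 0 ∨ yv = 1) → ConvexOn ℝ (Set.Icc (0:ℝ) 1) (ℓ yv))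
    (D : ℝ) (hD : ∀ yv : ℝ, (yv = 0 ∨ yv = 1) → ∀ a ∈ Set.Icc (0:ℝ) 1,
      ∀ b ∈ Set.Icc (0:ℝ) 1, |ℓ yv a - ℓ yv b| ≤ D * |a - b|)
    (C : ℝ) (hC : ∀ a ∈ Set.Icc (0:ℝ) 1, |ℓ 0 a - ℓ 1 a| ≤ C)
    (k : ℝ → ℝ) (hk : ∀ p ∈ P, k p ∈ Set.Icc (0:ℝ) 1 ∧
      ∀ a ∈ Set.Icc (0:ℝ) 1,
        (1 - p) * ℓ 0 (k p) + p * ℓ 1 (k p) ≤ (1 - p) * ℓ 0 a + p * ℓ 1 a)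
    (α : ℝ)
    (hmc : ∀ f : ℝ → X → ℝ, (∀ p z, f p z ∈ Set.Icc (0:ℝ) 1) →
      ∑ p ∈ P, (((S p).card : ℝ) / T) *
        |(1 / ((S p).card : ℝ)) * ∑ t ∈ S p, f p (x t) * (y t - p)| ≤ α) :
    ∀ f : ℝ → X → ℝ, (∀ p ∈ P, ∀ t ∈ S p, f p (x t) ∈ Set.Icc (0:ℝ) 1) →
      ∑ p ∈ P, (((S p).card : ℝ) / T) *
        ((1 / ((S p).card : ℝ)) * ∑ t ∈ S p, ℓ (y t) (k p) -
          (1 / ((S p).card : ℝ)) * ∑ t ∈ S p, ℓ (y t) (f p (x t))) ≤ (C + 4 * D) * α := by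
  intro f hf
  have h01 : (0:ℝ) ∈ Set.Icc (0:ℝ) 1 := ⟨le_refl 0, zero_le_one⟩
  have h11 : (1:ℝ) ∈ Set.Icc (0:ℝ) 1 := ⟨zero_le_one, le_refl 1⟩
  have hD0 : 0 ≤ D := by
    have h := hD 0 (Or.inl rfl) 0 h01 1 h11
    have h2 := abs_nonneg (ℓ 0 0 - ℓ 0 1)
    have h3 : |(0:ℝ) - 1| = 1 := by norm_num
    rw [h3, mul_one] at h
    linarith
  have hC0 : 0 ≤ C := le_trans (abs_nonneg _) (hC 0 h01)
  have hα : 0 ≤ α := by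
    have h := hmc (fun _ _ => 0) (fun _ _ => h01)
    simpa using h
  -- clamped family
  have hf'mem : ∀ p z, max 0 (min 1 (f p z)) ∈ Set.Icc (0:ℝ) 1 := by
    intro p z
    exact ⟨le_max_left _ _, max_le zero_le_one (min_le_left _ _)⟩
  have hf'eq : ∀ p ∈ P, ∀ t ∈ S p, max 0 (min 1 (f p (x t))) = f p (x t) := by
    intro p hp t ht
    obtain ⟨h0, h1⟩ := hf p hp t ht
    rw [min_eq_right h1, max_eq_right h0]
  -- Lipschitz bound on the discrepancy
  have hglip : ∀ p ∈ P, ∀ a ∈ Set.Icc (0:ℝ) 1,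
      |(ℓ 1 a - ℓ 0 a) - (ℓ 1 (k p) - ℓ 0 (k p))| ≤ 2 * D := by
    intro p hp a ha
    obtain ⟨hk1, _⟩ := hk p hp
    have h1 := hD 1 (Or.inr rfl) a ha (k p) hk1
    have h0 := hD 0 (Or.inl rfl) a ha (k p) hk1
    have hab : |a - k p| ≤ 1 := by
      rw [abs_le]
      constructor
      · linarith [ha.1, hk1.2]
      · linarith [ha.2, hk1.1]
    have habs : (0:ℝ) ≤ |a - k p| := abs_nonneg _
    have e1 : (ℓ 1 a - ℓ 0 a) - (ℓ 1 (k p) - ℓ 0 (k p))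
        = (ℓ 1 a - ℓ 1 (k p)) - (ℓ 0 a - ℓ 0 (k p)) := by ring
    calc |(ℓ 1 a - ℓ 0 a) - (ℓ 1 (k p) - ℓ 0 (k p))|
        = |(ℓ 1 a - ℓ 1 (k p)) - (ℓ 0 a - ℓ 0 (k p))| := by rw [e1]
      _ ≤ |ℓ 1 a - ℓ 1 (k p)| + |ℓ 0 a - ℓ 0 (k p)| := abs_sub _ _
      _ ≤ D * |a - k p| + D * |a - k p| := add_le_add h1 h0
      _ ≤ 2 * D := by nlinarith
  -- test families
  set G : ℝ → X → ℝ := fun p z =>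
    (ℓ 1 (max 0 (min 1 (f p z))) - ℓ 0 (max 0 (min 1 (f p z)))) - (ℓ 1 (k p) - ℓ 0 (k p))
    with hGdef
  have hGbd : ∀ p ∈ P, ∀ z, |G p z| ≤ 2 * D := fun p hp z =>
    hglip p hp _ (hf'mem p z)
  set u : ℝ → X → ℝ := fun p z =>
    if p ∈ P then (if D = 0 then 0 else max (G p z) 0 / (2*D)) else 0 with hudef
  set v : ℝ → X → ℝ := fun p z =>
    if p ∈ P then (if D = 0 then 0 else max (-(G p z)) 0 / (2*D)) else 0 with hvdef
  have humem : ∀ p z, u p z ∈ Set.Icc (0:ℝ) 1 := by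
    intro p z
    simp only [hudef]
    split_ifs with hp hDz
    · exact h01
    · have hDpos : 0 < D := lt_of_le_of_ne hD0 (Ne.symm hDz)
      have hb := hGbd p hp z
      constructor
      · positivity
      · rw [div_le_one (by linarith)]
        calc max (G p z) 0 ≤ |G p z| := max_le (le_abs_self _) (abs_nonneg _)
          _ ≤ 2 * D := hb
    · exact h01
  have hvmem : ∀ p z, v p z ∈ Set.Icc (0:ℝ) 1 := by
    intro p z
    simp only [hvdef]
    split_ifs with hp hDz
    · exact h01
    · have hDpos : 0 < D := lt_of_le_of_ne hD0 (Ne.symm hDz)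
      have hb := hGbd p hp z
      constructor
      · positivity
      · rw [div_le_one (by linarith)]
        calc max (-(G p z)) 0 ≤ |G p z| := by
              refine max_le ?_ (abs_nonneg _)
              rw [← abs_neg]; exact le_abs_self _
          _ ≤ 2 * D := hb
    · exact h01
  have huv : ∀ p ∈ P, ∀ z, 2*D*(u p z - v p z) = G p z := by
    intro p hp z
    simp only [hudef, hvdef, if_pos hp]
    by_cases hDz : D = 0
    · simp only [if_pos hDz]
      have hb := hGbd p hp z
      rw [hDz] at hb ⊢
      have h0' : |G p z| ≤ 0 := by linarith
      have h0 : G p z = 0 := abs_nonpos_iff.mp h0'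
      rw [h0]; ring
    · simp only [if_neg hDz]
      have h2D : (2*D) ≠ 0 := by
        intro hcon; apply hDz; linarith
      rw [div_sub_div_same, max_zero_sub_max_neg_zero_eq_self, mul_div_cancel₀ _ h2D]
  have hU := hmc u humem
  have hV := hmc v hvmem
  have hmain : ∀ p ∈ P,
      (((S p).card : ℝ) / T) *
        ((1 / ((S p).card : ℝ)) * ∑ t ∈ S p, ℓ (y t) (k p) -
          (1 / ((S p).card : ℝ)) * ∑ t ∈ S p, ℓ (y t) (f p (x t)))
      ≤ (((S p).card : ℝ) / T) *
          (2*D*|(1 / ((S p).card : ℝ)) * ∑ t ∈ S p, u p (x t) * (y t - p)|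
           + 2*D*|(1 / ((S p).card : ℝ)) * ∑ t ∈ S p, v p (x t) * (y t - p)|) := by
    intro p hp
    rcases Nat.eq_zero_or_pos (S p).card with hn | hn
    · have hSp : S p = ∅ := Finset.card_eq_zero.mp hn
      rw [hSp]
      simp
    · refine mul_le_mul_of_nonneg_left ?_ (div_nonneg (Nat.cast_nonneg _) hTpos.le)
      have hrw : ∑ t ∈ S p, ℓ (y t) (f p (x t))
          = ∑ t ∈ S p, ℓ (y t) (max 0 (min 1 (f p (x t)))) :=
        Finset.sum_congr rfl (fun t ht => by rw [hf'eq p hp t ht])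
      rw [hrw]
      exact omni_per_group (S p) y hy ℓ hconv D hD0 p (hP p hp) (k p) (hk p hp).1
        (hk p hp).2 (fun t => max 0 (min 1 (f p (x t)))) (fun t _ => hf'mem p (x t))
        (fun t => u p (x t)) (fun t => v p (x t))
        (fun t _ => huv p hp (x t)) hn
  calc ∑ p ∈ P, (((S p).card : ℝ) / T) *
        ((1 / ((S p).card : ℝ)) * ∑ t ∈ S p, ℓ (y t) (k p) -
          (1 / ((S p).card : ℝ)) * ∑ t ∈ S p, ℓ (y t) (f p (x t)))
      ≤ ∑ p ∈ P, (((S p).card : ℝ) / T) *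
          (2*D*|(1 / ((S p).card : ℝ)) * ∑ t ∈ S p, u p (x t) * (y t - p)|
           + 2*D*|(1 / ((S p).card : ℝ)) * ∑ t ∈ S p, v p (x t) * (y t - p)|) :=
        Finset.sum_le_sum hmain
    _ = 2*D*(∑ p ∈ P, (((S p).card : ℝ) / T) *
            |(1 / ((S p).card : ℝ)) * ∑ t ∈ S p, u p (x t) * (y t - p)|)
        + 2*D*(∑ p ∈ P, (((S p).card : ℝ) / T) *
            |(1 / ((S p).card : ℝ)) * ∑ t ∈ S p, v p (x t) * (y t - p)|) := by
        rw [Finset.mul_sum, Finset.mul_sum, ← Finset.sum_add_distrib]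
        exact Finset.sum_congr rfl (fun p _ => by ring)
    _ ≤ 2*D*α + 2*D*α := by
        have h2D : (0:ℝ) ≤ 2*D := by linarith
        exact add_le_add (mul_le_mul_of_nonneg_left hU h2D)
          (mul_le_mul_of_nonneg_left hV h2D)
    _ ≤ (C + 4 * D) * α := by nlinarith
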